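/- On the reference d-simplex τ̂ = { x ∈ ℝ^d : x_i > 0, ∑ x_i < 1 }, every affine function v satisfies |v|_{H¹(τ̂)} ≤ (d+1)(d+2)^{1/2} ‖v‖_{L²(τ̂)}, and this constant is sharp: sup over nonzero affine v of |v|_{H¹(τ̂)}/‖v‖_{L²(τ̂)} equals (d+1)√(d+2). -/

import Mathlib

open MeasureTheory Metric Set

/-- The open reference d-simplex `{x : x_i > 0, ∑ x_i < 1}`. -/
def refSimplex (d : ℕ) : Set (EuclideanSpace ℝ (Fin d)) :=
  {x | (∀ i, 0 < x i) ∧ ∑ i, x i < 1}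

/-! ### Auxiliary results -/

lemma fact_prod_aux (m : ℕ) : ∀ n : ℕ,
    m.factorial * ∏ j ∈ Finset.range (n+1), (m+1+j) = (m+n+1).factorial := by
  intro n
  induction n with
  | zero => simp [Nat.factorial_succ, Nat.mul_comm]
  | succ n ih =>
      rw [Finset.prod_range_succ, ← Nat.mul_assoc, ih,
        show m+(n+1)+1 = (m+n+1)+1 by ring,
        show m+1+(n+1) = (m+n+1)+1 by ring, Nat.factorial_succ ((m+n+1))]
      ring

lemma beta_nat (m n : ℕ) :
    ∫ x in (0:ℝ)..1, x ^ m * (1 - x) ^ n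
      = (m.factorial * n.factorial : ℝ) / (m+n+1).factorial := by
  have h := Complex.betaIntegral_eval_nat_add_one_right
    (u := (m : ℂ) + 1) (by simp; positivity) n
  rw [Complex.betaIntegral] at h
  have h2 : ∀ x : ℝ,
      (x:ℂ) ^ ((m:ℂ) + 1 - 1) * ((1:ℂ) - (x:ℂ)) ^ ((n:ℂ) + 1 - 1)
        = ((x ^ m * (1-x)^n : ℝ) : ℂ) := by
    intro x
    rw [show (m:ℂ)+1-1 = ((m:ℕ):ℂ) by ring,
      show (n:ℂ)+1-1 = ((n:ℕ):ℂ) by ring,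
      Complex.cpow_natCast, Complex.cpow_natCast]
    push_cast
    ring
  have h3 : (∫ x : ℝ in (0:ℝ)..1,
      (x:ℂ) ^ ((m:ℂ) + 1 - 1) * ((1:ℂ) - (x:ℂ)) ^ ((n:ℂ) + 1 - 1))
      = ((∫ x in (0:ℝ)..1, x ^ m * (1 - x) ^ n : ℝ) : ℂ) := by
    rw [show (fun x : ℝ => (x:ℂ) ^ ((m:ℂ) + 1 - 1) * ((1:ℂ) - (x:ℂ)) ^ ((n:ℂ) + 1 - 1))
      = fun x : ℝ => ((x ^ m * (1-x)^n : ℝ) : ℂ) from funext h2]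
    exact intervalIntegral.integral_ofReal
  rw [h3] at h
  have h5 : (∏ j ∈ Finset.range (n + 1), ((m:ℂ) + 1 + (j:ℕ)))
      = ((((m+n+1).factorial : ℕ) : ℂ) / ((m.factorial : ℕ) : ℂ)) := by
    have : (∏ j ∈ Finset.range (n + 1), ((m:ℂ) + 1 + (j:ℕ)))
        = (((∏ j ∈ Finset.range (n+1), (m+1+j) : ℕ) : ℂ)) := by
      push_cast; ring_nf
    rw [this, eq_div_iff (by exact_mod_cast Nat.factorial_ne_zero m), ← Nat.cast_mul,
      Nat.mul_comm, fact_prod_aux]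
  rw [h5] at h
  have hm : ((m.factorial : ℕ) : ℂ) ≠ 0 := by exact_mod_cast Nat.factorial_ne_zero m
  have hmn : (((m+n+1).factorial : ℕ) : ℂ) ≠ 0 := by exact_mod_cast Nat.factorial_ne_zero _
  field_simp at h
  have hr : (∫ x in (0:ℝ)..1, x ^ m * (1 - x) ^ n) * ((m+n+1).factorial : ℝ)
      = (n.factorial : ℝ) * m.factorial := by exact_mod_cast h
  have hmr : ((m+n+1).factorial : ℝ) ≠ 0 := by exact_mod_cast Nat.factorial_ne_zero _
  field_simp at hr ⊢
  linarith [hr]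

/-! ### The corner simplex in `Fin d → ℝ` -/

def cornerS (d : ℕ) (s : ℝ) : Set (Fin d → ℝ) := {x | (∀ i, 0 < x i) ∧ ∑ i, x i < s}

lemma cornerS_meas (d : ℕ) (s : ℝ) : MeasurableSet (cornerS d s) := by
  have : cornerS d s = (⋂ i, {x : Fin d → ℝ | 0 < x i}) ∩ {x | ∑ i, x i < s} := by
    ext x; simp [cornerS]
  rw [this]
  exact (MeasurableSet.iInter fun i =>
    measurableSet_lt measurable_const (measurable_pi_apply i)).inter
    (measurableSet_lt (Finset.measurable_sum _ fun i _ => measurable_pi_apply i)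
      measurable_const)

lemma cornerS_subset (d : ℕ) : cornerS d 1 ⊆ Set.Icc (0 : Fin d → ℝ) 1 := by
  rintro x ⟨hpos, hsum⟩
  constructor
  · intro i; exact (hpos i).le
  · intro i
    calc x i ≤ ∑ j, x j := Finset.single_le_sum (fun j _ => (hpos j).le) (Finset.mem_univ i)
    _ ≤ 1 := hsum.le

lemma integrableOn_corner {d : ℕ} {f : (Fin d → ℝ) → ℝ} (hf : Continuous f) :
    IntegrableOn f (cornerS d 1) :=
  (hf.continuousOn.integrableOn_compact isCompact_Icc).mono_set (cornerS_subset d)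

lemma corner_scale (d : ℕ) (k : Fin d → ℕ) {s : ℝ} (hs : 0 < s) :
    ∫ x in cornerS d s, ∏ i, x i ^ k i
      = s ^ (d + ∑ i, k i) * ∫ x in cornerS d 1, ∏ i, x i ^ k i := by
  set K := ∑ i, k i with hK
  set f : (Fin d → ℝ) → ℝ := fun x => ∏ i, x i ^ k i with hf
  set F : (Fin d → ℝ) → ℝ := (cornerS d 1).indicator f with hF
  have key : ∀ x : Fin d → ℝ, (cornerS d s).indicator f x = s ^ K * F (s⁻¹ • x) := by
    intro x
    have hmem : (s⁻¹ • x) ∈ cornerS d 1 ↔ x ∈ cornerS d s := by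
      simp only [cornerS, Set.mem_setOf_eq, Pi.smul_apply, smul_eq_mul]
      constructor
      · rintro ⟨h1, h2⟩
        refine ⟨fun i => ?_, ?_⟩
        · have h3 : 0 < s * (s⁻¹ * x i) := mul_pos hs (h1 i)
          rwa [← mul_assoc, mul_inv_cancel₀ hs.ne', one_mul] at h3
        · rwa [← Finset.mul_sum, inv_mul_lt_iff₀ hs, mul_one] at h2
      · rintro ⟨h1, h2⟩
        refine ⟨fun i => mul_pos (inv_pos.2 hs) (h1 i), ?_⟩
        rw [← Finset.mul_sum, inv_mul_lt_iff₀ hs, mul_one]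
        exact h2
    by_cases hx : x ∈ cornerS d s
    · rw [Set.indicator_of_mem hx, hF, Set.indicator_of_mem (hmem.2 hx)]
      simp only [hf, Pi.smul_apply, smul_eq_mul, mul_pow]
      rw [Finset.prod_mul_distrib, Finset.prod_pow_eq_pow_sum, ← hK, ← mul_assoc, ← mul_pow,
        mul_inv_cancel₀ hs.ne', one_pow, one_mul]
    · rw [Set.indicator_of_notMem hx, hF, Set.indicator_of_notMem (fun h => hx (hmem.1 h)),
        mul_zero]
  rw [← integral_indicator (cornerS_meas d s)]
  refine (integral_congr_ae (Filter.Eventually.of_forall key)).trans ?_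
  rw [integral_const_mul, MeasureTheory.Measure.integral_comp_smul volume F s⁻¹,
    Module.finrank_fin_fun, integral_indicator (cornerS_meas d 1), inv_pow, inv_inv,
    abs_of_nonneg (by positivity), smul_eq_mul, ← mul_assoc, ← pow_add]
  ring_nf

theorem corner_master : ∀ (d : ℕ) (k : Fin d → ℕ),
    ∫ x in cornerS d 1, ∏ i, x i ^ k i
      = (∏ i, ((k i).factorial : ℝ)) / ((d + ∑ i, k i).factorial : ℝ) := by
  intro d
  induction d with
  | zero =>
      intro k
      have huniv : cornerS 0 1 = Set.univ := by
        ext x; simp [cornerS]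
      rw [huniv]
      simp only [Finset.univ_eq_empty, Finset.prod_empty, Finset.sum_empty]
      rw [setIntegral_const]
      simp [volume_pi, Measure.pi_univ, Measure.real]
  | succ d ih =>
      intro k
      set f : (Fin (d+1) → ℝ) → ℝ := fun x => ∏ i, x i ^ k i with hfdef
      have hfc : Continuous f := by fun_prop
      set e := MeasurableEquiv.piFinSuccAbove (fun _ : Fin (d+1) => ℝ) 0 with he
      have hesymm : ∀ t : ℝ, ∀ y : Fin d → ℝ, e.symm (t, y) = Fin.cons t y := by
        intro t y
        simp [he, MeasurableEquiv.piFinSuccAbove, Fin.consEquiv]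
      have hmp : MeasurePreserving e.symm (volume : Measure (ℝ × (Fin d → ℝ))) volume :=
        (MeasureTheory.volume_preserving_piFinSuccAbove (fun _ : Fin (d+1) => ℝ) 0).symm
      have hint : Integrable ((cornerS (d+1) 1).indicator f) volume :=
        (integrable_indicator_iff (cornerS_meas _ _)).2 (integrableOn_corner hfc)
      have step1 : ∫ x in cornerS (d+1) 1, f x
          = ∫ z : ℝ × (Fin d → ℝ), ((cornerS (d+1) 1).indicator f) (e.symm z) := by
        rw [← integral_indicator (cornerS_meas _ _)]
        exact (hmp.integral_comp e.symm.measurableEmbedding _).symm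
      set K' := ∑ j : Fin d, k j.succ with hK'
      set g : (Fin d → ℝ) → ℝ := fun y => ∏ j, y j ^ k j.succ with hgdef
      have hpt : ∀ t : ℝ, ∀ y : Fin d → ℝ,
          ((cornerS (d+1) 1).indicator f) (e.symm (t, y))
            = (Set.Ioo (0:ℝ) 1).indicator (fun t' => t' ^ k 0) t
                * (cornerS d (1 - t)).indicator g y := by
        intro t y
        rw [hesymm]
        have hmem : Fin.cons t y ∈ cornerS (d+1) 1
            ↔ (t ∈ Set.Ioo (0:ℝ) 1 ∧ y ∈ cornerS d (1-t)) := by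
          simp only [cornerS, Set.mem_setOf_eq, Fin.forall_fin_succ, Fin.cons_zero, Fin.cons_succ,
            Fin.sum_univ_succ, Set.mem_Ioo]
          constructor
          · rintro ⟨⟨ht, hy⟩, hsum⟩
            have hy0 : 0 ≤ ∑ j : Fin d, y j := Finset.sum_nonneg fun j _ => (hy j).le
            exact ⟨⟨ht, by linarith⟩, hy, by linarith⟩
          · rintro ⟨⟨ht0, ht1⟩, hy, hsum⟩
            exact ⟨⟨ht0, hy⟩, by linarith⟩
        have hfval : f (Fin.cons t y) = t ^ k 0 * g y := by
          rw [hfdef]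
          simp only [Fin.prod_univ_succ, Fin.cons_zero, Fin.cons_succ]
          rfl
        by_cases hc : Fin.cons t y ∈ cornerS (d+1) 1
        · obtain ⟨ht, hy⟩ := hmem.1 hc
          rw [Set.indicator_of_mem hc, Set.indicator_of_mem ht, Set.indicator_of_mem hy, hfval]
        · rw [Set.indicator_of_notMem hc]
          by_cases ht : t ∈ Set.Ioo (0:ℝ) 1
          · have hy : y ∉ cornerS d (1-t) := fun hy => hc (hmem.2 ⟨ht, hy⟩)
            rw [Set.indicator_of_notMem hy, mul_zero]
          · rw [Set.indicator_of_notMem ht, zero_mul]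
      have step2 : (∫ z : ℝ × (Fin d → ℝ), ((cornerS (d+1) 1).indicator f) (e.symm z))
          = ∫ t : ℝ, ∫ y : Fin d → ℝ, ((cornerS (d+1) 1).indicator f) (e.symm (t, y)) := by
        rw [Measure.volume_eq_prod]
        exact integral_prod _ (by
          rw [Measure.volume_eq_prod] at *
          exact (hmp.integrable_comp_emb e.symm.measurableEmbedding).2 hint)
      have inner : ∀ t : ℝ, (∫ y : Fin d → ℝ, ((cornerS (d+1) 1).indicator f) (e.symm (t, y)))
          = (Set.Ioo (0:ℝ) 1).indicator
              (fun t' => t' ^ k 0 * ((1-t') ^ (d + K')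
                * ((∏ j : Fin d, ((k j.succ).factorial : ℝ)) / ((d + K').factorial : ℝ)))) t := by
        intro t
        simp_rw [hpt t]
        rw [integral_const_mul]
        by_cases ht : t ∈ Set.Ioo (0:ℝ) 1
        · rw [Set.indicator_of_mem ht, Set.indicator_of_mem ht]
          congr 1
          rw [integral_indicator (cornerS_meas _ _)]
          have h1t : 0 < 1 - t := by linarith [ht.2]
          rw [hgdef, corner_scale d (fun j => k j.succ) h1t, ih (fun j => k j.succ)]
        · rw [Set.indicator_of_notMem ht, Set.indicator_of_notMem ht, zero_mul]
      simp_rw [step1, step2, inner]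
      rw [integral_indicator measurableSet_Ioo, ← MeasureTheory.integral_Ioc_eq_integral_Ioo,
        ← intervalIntegral.integral_of_le (by norm_num : (0:ℝ) ≤ 1)]
      simp_rw [← mul_assoc]
      rw [intervalIntegral.integral_mul_const, beta_nat (k 0) (d + K')]
      have hsum : ∑ i : Fin (d+1), k i = k 0 + K' := by rw [Fin.sum_univ_succ, hK']
      have hprod : ∏ i : Fin (d+1), ((k i).factorial : ℝ)
          = ((k 0).factorial : ℝ) * ∏ j : Fin d, ((k j.succ).factorial : ℝ) := by
        rw [Fin.prod_univ_succ]
      rw [hsum, hprod, show ((d:ℕ) + 1 + (k 0 + K')) = (k 0 + (d + K') + 1) by ring]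
      have h2 : ((d + K').factorial : ℝ) ≠ 0 := by exact_mod_cast Nat.factorial_ne_zero _
      have h3 : (((k 0 + (d + K') + 1)).factorial : ℝ) ≠ 0 := by
        exact_mod_cast Nat.factorial_ne_zero _
      field_simp

lemma corner_int_one (d : ℕ) : ∫ x in cornerS d 1, (1:ℝ) = 1 / (d.factorial : ℝ) := by
  have := corner_master d (fun _ => 0)
  simpa using this

lemma corner_int_single (d : ℕ) (i : Fin d) (m : ℕ) :
    ∫ x in cornerS d 1, (x i) ^ m = (m.factorial : ℝ) / ((d + m).factorial : ℝ) := by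
  have := corner_master d (fun l => if l = i then m else 0)
  have h1 : ∀ x : Fin d → ℝ, (∏ l, x l ^ (if l = i then m else 0)) = x i ^ m := by
    intro x
    rw [Finset.prod_eq_single i (fun l _ hl => by simp [hl]) (by simp)]
    simp
  have h2 : (∏ l, (((if l = i then m else 0) : ℕ).factorial : ℝ)) = (m.factorial : ℝ) := by
    rw [Finset.prod_eq_single i (fun l _ hl => by simp [hl]) (by simp)]
    simp
  have h3 : (∑ l, if l = i then m else 0) = m := by simp
  simp_rw [h1, h2, h3] at this
  exact this

lemma corner_int_pair (d : ℕ) {i j : Fin d} (hij : i ≠ j) :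
    ∫ x in cornerS d 1, (x i) * (x j) = 1 / (((d + 2)).factorial : ℝ) := by
  have := corner_master d (fun l => (if l = i then 1 else 0) + (if l = j then 1 else 0))
  have h1 : ∀ x : Fin d → ℝ,
      (∏ l, x l ^ ((if l = i then 1 else 0) + (if l = j then 1 else 0))) = x i * x j := by
    intro x
    simp_rw [pow_add]
    rw [Finset.prod_mul_distrib]
    congr 1
    · rw [Finset.prod_eq_single i (fun l _ hl => by simp [hl]) (by simp)]; simp
    · rw [Finset.prod_eq_single j (fun l _ hl => by simp [hl]) (by simp)]; simp
  have h2 : (∏ l, ((((if l = i then 1 else 0) + (if l = j then 1 else 0)) : ℕ).factorial : ℝ))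
      = 1 := by
    apply Finset.prod_eq_one
    intro l _
    by_cases h : l = i <;> by_cases h' : l = j <;> simp_all [Nat.factorial]
  have h3 : (∑ l, ((if l = i then 1 else 0) + (if l = j then 1 else 0))) = 2 := by
    rw [Finset.sum_add_distrib]
    simp [Finset.sum_ite_eq']
  simp_rw [h1, h2, h3] at this
  exact this
/-! ### Transfer to Euclidean space -/

lemma refSimplex_meas (d : ℕ) : MeasurableSet (refSimplex d) := by
  have : refSimplex d = (⋂ i, {x : EuclideanSpace ℝ (Fin d) | 0 < x i}) ∩ {x | ∑ i, x i < 1} := by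
    ext x; simp [refSimplex]
  rw [this]
  have hm : ∀ i, Measurable fun x : EuclideanSpace ℝ (Fin d) => x i := fun i =>
    (continuous_apply i).measurable.comp ((MeasurableEquiv.toLp 2 (Fin d → ℝ)).symm).measurable
  exact (MeasurableSet.iInter fun i =>
    measurableSet_lt measurable_const (hm i)).inter
    (measurableSet_lt (Finset.measurable_sum _ fun i _ => hm i) measurable_const)

lemma refSimplex_transfer (d : ℕ) (g : EuclideanSpace ℝ (Fin d) → ℝ) :
    ∫ x in refSimplex d, g x
      = ∫ y in cornerS d 1, g (((MeasurableEquiv.toLp 2 (Fin d → ℝ)).symm).symm y) := by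
  have hmp := (EuclideanSpace.volume_preserving_symm_measurableEquiv_toLp (Fin d)).symm
  rw [← integral_indicator (refSimplex_meas d),
    ← hmp.integral_comp ((MeasurableEquiv.toLp 2 (Fin d → ℝ)).symm).symm.measurableEmbedding,
    ← integral_indicator (cornerS_meas d 1)]
  have key : (fun y : Fin d → ℝ =>
      (refSimplex d).indicator g (((MeasurableEquiv.toLp 2 (Fin d → ℝ)).symm).symm y))
      = fun y => (cornerS d 1).indicator
          (fun y' => g (((MeasurableEquiv.toLp 2 (Fin d → ℝ)).symm).symm y')) y := by
    funext y
    have hmem : ((MeasurableEquiv.toLp 2 (Fin d → ℝ)).symm).symm y ∈ refSimplex d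
        ↔ y ∈ cornerS d 1 := Iff.rfl
    by_cases hy : y ∈ cornerS d 1
    · rw [Set.indicator_of_mem (hmem.2 hy), Set.indicator_of_mem hy]
    · rw [Set.indicator_of_notMem (fun h => hy (hmem.1 h)), Set.indicator_of_notMem hy]
  rw [key]

lemma grad_affine (d : ℕ) (A : EuclideanSpace ℝ (Fin d) →ᵃ[ℝ] ℝ) (x : EuclideanSpace ℝ (Fin d)) :
    gradient (fun y => A y) x
      = (InnerProductSpace.toDual ℝ (EuclideanSpace ℝ (Fin d))).symm
          (LinearMap.toContinuousLinearMap A.linear) := by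
  have hfd : HasFDerivAt (fun y => A y) (LinearMap.toContinuousLinearMap A.linear) x := by
    have h1 : (fun y : EuclideanSpace ℝ (Fin d) => A y)
        = fun y => (LinearMap.toContinuousLinearMap A.linear) y + A 0 := by
      funext y
      exact congrFun (AffineMap.decomp A) y
    rw [h1]
    exact (LinearMap.toContinuousLinearMap A.linear).hasFDerivAt.add_const (A 0)
  rw [gradient, hfd.fderiv]

lemma grad_coords (d : ℕ) (ℓ : EuclideanSpace ℝ (Fin d) →L[ℝ] ℝ) :
    ‖(InnerProductSpace.toDual ℝ (EuclideanSpace ℝ (Fin d))).symm ℓ‖ ^ 2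
      = ∑ i, (ℓ (EuclideanSpace.single i 1)) ^ 2 := by
  set g := (InnerProductSpace.toDual ℝ (EuclideanSpace ℝ (Fin d))).symm ℓ with hg
  have hcoord : ∀ i, g i = ℓ (EuclideanSpace.single i 1) := by
    intro i
    have h1 : inner ℝ g (EuclideanSpace.single i (1:ℝ)) = ℓ (EuclideanSpace.single i 1) :=
      InnerProductSpace.toDual_symm_apply
    rw [← h1, EuclideanSpace.inner_single_right]
    simp [mul_comm]
  rw [EuclideanSpace.norm_eq, Real.sq_sqrt (by positivity)]
  congr 1; funext i
  rw [hcoord i, Real.norm_eq_abs, sq_abs]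

lemma affine_expand (d : ℕ) (A : EuclideanSpace ℝ (Fin d) →ᵃ[ℝ] ℝ)
    (x : EuclideanSpace ℝ (Fin d)) :
    A x = ∑ i, A.linear (EuclideanSpace.single i 1) * x i + A 0 := by
  have hx : x = ∑ i, x i • EuclideanSpace.single i (1:ℝ) := by
    ext j
    rw [WithLp.ofLp_sum, Finset.sum_apply]
    simp [EuclideanSpace.single_apply]
  have h0 : A x = A.linear x + A 0 := congrFun (AffineMap.decomp A) x
  rw [h0]
  congr 1
  conv_lhs => rw [hx]
  rw [map_sum]
  congr 1
  funext i
  rw [_root_.map_smul, smul_eq_mul, mul_comm]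

/-! ### The two integral formulas -/

lemma vol_refSimplex (d : ℕ) :
    (volume (refSimplex d)).toReal = 1 / (d.factorial : ℝ) := by
  have h := refSimplex_transfer d (fun _ => (1:ℝ))
  rw [corner_int_one d] at h
  rw [setIntegral_const] at h
  simp at h; rw [one_div]; exact h

lemma grad_int (d : ℕ) (A : EuclideanSpace ℝ (Fin d) →ᵃ[ℝ] ℝ) :
    ∫ x in refSimplex d, ‖gradient (fun y => A y) x‖ ^ 2
      = (∑ i, (A.linear (EuclideanSpace.single i 1)) ^ 2) / (d.factorial : ℝ) := by
  have hpt : (fun x : EuclideanSpace ℝ (Fin d) => ‖gradient (fun y => A y) x‖ ^ 2)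
      = fun _ => ∑ i, (A.linear (EuclideanSpace.single i 1)) ^ 2 := by
    funext x
    rw [grad_affine, grad_coords]
    simp
  rw [hpt, setIntegral_const, measureReal_def, vol_refSimplex, smul_eq_mul]
  ring

lemma mass_int (d : ℕ) (A : EuclideanSpace ℝ (Fin d) →ᵃ[ℝ] ℝ) :
    ∫ x in refSimplex d, (A x) ^ 2
      = ((∑ i, (A.linear (EuclideanSpace.single i 1)) ^ 2)
          + (∑ i, A.linear (EuclideanSpace.single i 1)) ^ 2) / ((d+2).factorial : ℝ)
        + 2 * (A 0) * (∑ i, A.linear (EuclideanSpace.single i 1)) / ((d+1).factorial : ℝ)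
        + (A 0) ^ 2 / (d.factorial : ℝ) := by
  set a : Fin d → ℝ := fun i => A.linear (EuclideanSpace.single i 1) with ha
  set c : ℝ := A 0 with hc
  rw [refSimplex_transfer d (fun x => (A x)^2)]
  have hpt : (fun y : Fin d → ℝ => (A (((MeasurableEquiv.toLp 2 (Fin d → ℝ)).symm).symm y))^2)
      = fun y => (∑ i, ∑ j, (a i * a j) * (y i * y j))
          + ((∑ i, (2*c*a i) * y i) + c^2) := by
    funext y
    rw [affine_expand]
    have hyc : ∀ i : Fin d, (((MeasurableEquiv.toLp 2 (Fin d → ℝ)).symm).symm y) i = y i :=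
      fun i => rfl
    simp_rw [hyc]
    have h1 : (∑ i, a i * y i)^2 = ∑ i, ∑ j, (a i * a j) * (y i * y j) := by
      rw [sq, Finset.sum_mul_sum]
      exact Finset.sum_congr rfl fun i _ => Finset.sum_congr rfl fun j _ => by ring
    have h2 : 2 * (∑ i, a i * y i) * c = ∑ i, (2*c*a i) * y i := by
      have he : ∀ i : Fin d, (2*c*a i) * y i = (2*c) * (a i * y i) := fun i => by ring
      simp_rw [he, ← Finset.mul_sum]
      ring
    have hav : ∀ i : Fin d, A.linear (EuclideanSpace.single i 1) = a i := fun _ => rfl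
    have hcv : A 0 = c := rfl
    simp_rw [hav, hcv]
    rw [add_sq, h1, h2, add_assoc]
  rw [hpt]
  have hi1 : IntegrableOn (fun y : Fin d → ℝ => ∑ i, ∑ j, (a i * a j) * (y i * y j))
      (cornerS d 1) := integrableOn_corner (by fun_prop)
  have hi2 : IntegrableOn (fun y : Fin d → ℝ => ∑ i, (2*c*a i) * y i)
      (cornerS d 1) := integrableOn_corner (by fun_prop)
  have hi3 : IntegrableOn (fun _ : Fin d → ℝ => c^2) (cornerS d 1) :=
    integrableOn_corner (by fun_prop)
  have hi23 : IntegrableOn (fun y : Fin d → ℝ => (∑ i, (2*c*a i) * y i) + c^2)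
      (cornerS d 1) := hi2.add hi3
  rw [integral_add hi1 hi23, integral_add hi2 hi3]
  -- first term
  have t1 : (∫ y in cornerS d 1, ∑ i, ∑ j, (a i * a j) * (y i * y j))
      = ((∑ i, a i ^ 2) + (∑ i, a i)^2) / ((d+2).factorial : ℝ) := by
    rw [integral_finset_sum _ (fun i _ => (integrableOn_corner (by fun_prop)))]
    have hin : ∀ i : Fin d, (∫ y in cornerS d 1, ∑ j, (a i * a j) * (y i * y j))
        = ∑ j, (a i * a j) * ∫ y in cornerS d 1, y i * y j := by
      intro i
      rw [integral_finset_sum _ (fun j _ => (integrableOn_corner (by fun_prop)))]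
      exact Finset.sum_congr rfl fun j _ => integral_const_mul _ _
    simp_rw [hin]
    have hval : ∀ i j : Fin d, (∫ y in cornerS d 1, y i * y j)
        = 1/((d+2).factorial : ℝ) + (if i = j then 1/((d+2).factorial : ℝ) else 0) := by
      intro i j
      by_cases h : i = j
      · subst h
        have : (fun y : Fin d → ℝ => y i * y i) = fun y => (y i)^2 := by
          funext y; ring
        rw [this, corner_int_single d i 2, if_pos rfl,
          show ((2:ℕ).factorial : ℝ) = 2 by norm_num [Nat.factorial]]
        ring
      · rw [corner_int_pair d h, if_neg h]
        ring
    simp_rw [hval, mul_add, Finset.sum_add_distrib, mul_ite, mul_zero,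
      Finset.sum_ite_eq, Finset.mem_univ, if_true]
    have e1 : ∑ i : Fin d, ∑ j : Fin d, a i * a j * (1/((d+2).factorial : ℝ))
        = (∑ i, a i)^2 * (1/((d+2).factorial : ℝ)) := by
      rw [sq, Finset.sum_mul_sum, Finset.sum_mul]
      exact Finset.sum_congr rfl fun i _ => (Finset.sum_mul _ _ _).symm
    have e2 : ∑ i : Fin d, a i * a i * (1/((d+2).factorial : ℝ))
        = (∑ i, a i ^ 2) * (1/((d+2).factorial : ℝ)) := by
      rw [Finset.sum_mul]
      exact Finset.sum_congr rfl fun i _ => by ring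
    rw [e1, e2]
    ring
  -- second term
  have t2 : (∫ y in cornerS d 1, ∑ i, (2*c*a i) * y i)
      = 2 * c * (∑ i, a i) / ((d+1).factorial : ℝ) := by
    rw [integral_finset_sum _ (fun i _ => (integrableOn_corner (by fun_prop)))]
    have hin : ∀ i : Fin d, (∫ y in cornerS d 1, (2*c*a i) * y i)
        = (2*c*a i) * (1 / ((d+1).factorial : ℝ)) := by
      intro i
      rw [integral_const_mul]
      have : (fun y : Fin d → ℝ => y i) = fun y => (y i)^1 := by funext y; ring
      rw [this, corner_int_single d i 1]
      norm_num
    simp_rw [hin, ← Finset.sum_mul]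
    rw [← Finset.mul_sum]
    ring
  -- third term
  have t3 : (∫ _ in cornerS d 1, c^2) = c^2 / (d.factorial : ℝ) := by
    rw [setIntegral_const]
    have h := corner_int_one d
    rw [setIntegral_const] at h
    simp only [smul_eq_mul, mul_one] at h
    rw [h, smul_eq_mul]
    ring
  rw [t1, t2, t3]
  have hav : ∀ i : Fin d, A.linear (EuclideanSpace.single i 1) = a i := fun _ => rfl
  simp_rw [hav]
  ring

/-! ### Main theorem -/

lemma sqrt_split (d : ℕ) (X : ℝ) :
    Real.sqrt ((((d:ℝ)+1)^2*((d:ℝ)+2)) * X)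
      = ((d:ℝ)+1) * Real.sqrt ((d:ℝ)+2) * Real.sqrt X := by
  rw [Real.sqrt_mul (by positivity), Real.sqrt_mul (sq_nonneg _),
    Real.sqrt_sq (by positivity)]

/-- the sharp inverse inequality on the reference simplex. Every affine
function `v` satisfies `|v|_{H¹(τ̂)} ≤ (d+1)√(d+2) ‖v‖_{L²(τ̂)}`, and the constant is
attained by some affine function that is nonzero in `L²`. -/
theorem ref_simplex_inverse_inequality (d : ℕ) (hd : 1 ≤ d) :
    (∀ A : EuclideanSpace ℝ (Fin d) →ᵃ[ℝ] ℝ,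
      Real.sqrt (∫ x in refSimplex d, ‖gradient (fun y => A y) x‖ ^ 2)
        ≤ ((d : ℝ) + 1) * Real.sqrt ((d : ℝ) + 2) *
            Real.sqrt (∫ x in refSimplex d, (A x) ^ 2)) ∧
    (∃ A : EuclideanSpace ℝ (Fin d) →ᵃ[ℝ] ℝ,
      (∫ x in refSimplex d, (A x) ^ 2) ≠ 0 ∧
      Real.sqrt (∫ x in refSimplex d, ‖gradient (fun y => A y) x‖ ^ 2)
        = ((d : ℝ) + 1) * Real.sqrt ((d : ℝ) + 2) *
            Real.sqrt (∫ x in refSimplex d, (A x) ^ 2)) := by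
  have hF : (0:ℝ) < (d.factorial : ℝ) := by exact_mod_cast d.factorial_pos
  have hfac1 : ((d+1).factorial : ℝ) = ((d:ℝ)+1) * (d.factorial : ℝ) := by
    rw [Nat.factorial_succ]; push_cast; ring
  have hfac2 : ((d+2).factorial : ℝ) = ((d:ℝ)+2) * (((d:ℝ)+1) * (d.factorial : ℝ)) := by
    rw [show d+2 = (d+1)+1 from rfl, Nat.factorial_succ, Nat.factorial_succ]; push_cast; ring
  constructor
  · intro A
    set a : Fin d → ℝ := fun i => A.linear (EuclideanSpace.single i 1) with ha
    set Q : ℝ := ∑ i, a i ^ 2 with hQ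
    set S : ℝ := ∑ i, a i with hS
    set c : ℝ := A 0 with hc
    have hIG := grad_int d A
    have hIM := mass_int d A
    have hCS : S^2 ≤ (d:ℝ) * Q := by
      have := sq_sum_le_card_mul_sum_sq (s := Finset.univ) (f := a)
      simpa [hS, hQ] using this
    have hIMnn : 0 ≤ ∫ x in refSimplex d, (A x)^2 :=
      setIntegral_nonneg (refSimplex_meas d) fun x _ => sq_nonneg _
    have key : (∫ x in refSimplex d, ‖gradient (fun y => A y) x‖ ^ 2)
        ≤ (((d:ℝ)+1)^2*((d:ℝ)+2)) * ∫ x in refSimplex d, (A x)^2 := by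
      rw [hIG, hIM, hfac1, hfac2]
      have h0 : 0 ≤ (((d:ℝ)*Q - S^2) + ((d:ℝ)+2)*(S + ((d:ℝ)+1)*c)^2) := by
        nlinarith [sq_nonneg (S + ((d:ℝ)+1)*c)]
      have heq : (((d:ℝ)+1)^2*((d:ℝ)+2))
            * ((Q + S^2)/(((d:ℝ)+2) * (((d:ℝ)+1) * (d.factorial : ℝ)))
              + 2*c*S/(((d:ℝ)+1) * (d.factorial : ℝ)) + c^2/(d.factorial : ℝ))
          - Q/(d.factorial : ℝ)
          = (((d:ℝ)*Q - S^2) + ((d:ℝ)+2)*(S + ((d:ℝ)+1)*c)^2) / (d.factorial : ℝ) := by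
        field_simp
        ring
      have h1 : 0 ≤ (((d:ℝ)*Q - S^2) + ((d:ℝ)+2)*(S + ((d:ℝ)+1)*c)^2) / (d.factorial : ℝ) :=
        div_nonneg h0 hF.le
      linarith [heq, h1]
    calc Real.sqrt (∫ x in refSimplex d, ‖gradient (fun y => A y) x‖ ^ 2)
        ≤ Real.sqrt ((((d:ℝ)+1)^2*((d:ℝ)+2)) * ∫ x in refSimplex d, (A x)^2) :=
          Real.sqrt_le_sqrt key
      _ = ((d:ℝ)+1) * Real.sqrt ((d:ℝ)+2) * Real.sqrt (∫ x in refSimplex d, (A x)^2) :=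
          sqrt_split d _
  · set c : ℝ := -((d:ℝ)/((d:ℝ)+1)) with hcdef
    set A : EuclideanSpace ℝ (Fin d) →ᵃ[ℝ] ℝ :=
      (((∑ i, (EuclideanSpace.proj i : EuclideanSpace ℝ (Fin d) →L[ℝ] ℝ)) :
          EuclideanSpace ℝ (Fin d) →L[ℝ] ℝ).toLinearMap).toAffineMap
        + AffineMap.const ℝ (EuclideanSpace ℝ (Fin d)) c with hA
    have haval : ∀ i : Fin d, A.linear (EuclideanSpace.single i 1) = 1 := by
      intro i
      rw [hA]
      simp [EuclideanSpace.single_apply]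
    have hcval : A 0 = c := by rw [hA]; simp
    have hd' : (0:ℝ) < (d:ℝ) := by exact_mod_cast hd
    have hIM : (∫ x in refSimplex d, (A x)^2)
        = (d:ℝ) / (((d:ℝ)+2) * (((d:ℝ)+1)^2) * (d.factorial : ℝ)) := by
      rw [mass_int d A]
      simp_rw [haval, hcval]
      rw [hfac1, hfac2]
      simp only [one_pow, Finset.sum_const, Finset.card_univ, Fintype.card_fin, nsmul_eq_mul,
        mul_one]
      rw [hcdef]
      have h1 : ((d:ℝ)+1) ≠ 0 := by positivity
      field_simp
      ring
    have hIG : (∫ x in refSimplex d, ‖gradient (fun y => A y) x‖ ^ 2)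
        = (d:ℝ) / (d.factorial : ℝ) := by
      rw [grad_int d A]
      simp_rw [haval]
      simp
    refine ⟨A, ?_, ?_⟩
    · rw [hIM]
      positivity
    · rw [hIG, ← sqrt_split d]
      congr 1
      rw [hIM]
      field_simp
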